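/- Upward propagation of evaluation: if Γ ⊢ e : τ, the environments correspond (U | μ : V : Γ [ro: r, rw: w]), and the update semantics evaluates U ⊢ e | μ ⇓ u | μ', then there exists a value v such that the value semantics evaluates V ⊢ e ⇓ v. -/

import Mathlib

/-- Permissions: Discardable, Shareable, Escapable. -/
inductive Perm | D | S | E
deriving DecidableEq

abbrev Kind := Set Perm

/-- Storage modes. -/
inductive Mode | readOnly | writable | unboxed
deriving DecidableEq

/-- The kind of a mode. -/
def kindOf : Mode → Kind
  | .readOnly => {Perm.D, Perm.S}
  | .writable => {Perm.E}
  | .unboxed  => {Perm.D, Perm.S, Perm.E}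

/-- Types: primitives, unit, variants (constructor-indexed; `none` marks a
    removed alternative), and records with possibly-taken fields (`true` =
    taken) and a storage mode. -/
inductive Ty
  | prim
  | unit
  | variant (ts : List (Option Ty))
  | record (fs : List (Ty × Bool)) (m : Mode)

/-- The kinding judgement for closed types. -/
inductive Kinding : Ty → Kind → Prop
  | prim : Kinding .prim κ
  | unit : Kinding .unit κ
  | variant : (∀ t ∈ ts, ∀ τ, t = some τ → Kinding τ κ) → Kinding (.variant ts) κ
  | record : κ ⊆ kindOf m → (∀ p ∈ fs, p.2 = false → Kinding p.1 κ) →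
      Kinding (.record fs m) κ

/-- Expressions (de Bruijn indices). -/
inductive Expr
  | var (n : ℕ)
  | unit
  | lit (n : ℕ)
  | letE (e₁ e₂ : Expr)
  | con (c : ℕ) (e : Expr)
  | caseE (e₁ : Expr) (c : ℕ) (e₂ e₃ : Expr)
  | rcd (es : List Expr)
  | take (e₁ : Expr) (k : ℕ) (e₂ : Expr)
  | put (e₁ : Expr) (k : ℕ) (e₂ : Expr)

abbrev Ptr := ℕ

/-- Update-semantics values. -/
inductive UVal
  | lit (n : ℕ)
  | unit
  | con (c : ℕ) (u : UVal)
  | rcd (us : List UVal)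
  | ptr (p : Ptr)

/-- Value-semantics values. -/
inductive VVal
  | lit (n : ℕ)
  | unit
  | con (c : ℕ) (v : VVal)
  | rcd (vs : List VVal)

/-- Mutable stores. -/
abbrev Store := Ptr → Option UVal

abbrev Ctx := List (Option Ty)

/-- Context weakening: dropped bindings must be discardable. -/
inductive Weaken : Ctx → Ctx → Prop
  | nil : Weaken [] []
  | keep : Weaken Γ Γ' → Weaken (o :: Γ) (o :: Γ')
  | drop : Kinding τ κ → Perm.D ∈ κ → Weaken Γ Γ' →
      Weaken (some τ :: Γ) (none :: Γ')

/-- Context splitting: duplicated bindings must be shareable. -/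
inductive Split : Ctx → Ctx → Ctx → Prop
  | nil : Split [] [] []
  | none : Split Γ Γ₁ Γ₂ → Split (none :: Γ) (none :: Γ₁) (none :: Γ₂)
  | left : Split Γ Γ₁ Γ₂ → Split (some τ :: Γ) (some τ :: Γ₁) (none :: Γ₂)
  | right : Split Γ Γ₁ Γ₂ → Split (some τ :: Γ) (none :: Γ₁) (some τ :: Γ₂)
  | both : Kinding τ κ → Perm.S ∈ κ → Split Γ Γ₁ Γ₂ →
      Split (some τ :: Γ) (some τ :: Γ₁) (some τ :: Γ₂)

/-- A context containing exactly one binding, at position n. -/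
def OnlyAt (Γ : Ctx) (n : ℕ) (τ : Ty) : Prop :=
  Γ[n]? = some (some τ) ∧ ∀ m, m ≠ n → ∀ τ', Γ[m]? = some (some τ') → False

/-- A context containing no bindings. -/
def AllNone (Γ : Ctx) : Prop := ∀ o ∈ Γ, o = none

mutual
/-- The linear typing judgement Γ ⊢ e : τ. -/
inductive Typing : Ctx → Expr → Ty → Prop
  | var : Weaken Γ Γ' → OnlyAt Γ' n τ → Typing Γ (.var n) τ
  | unit : Weaken Γ Γ' → AllNone Γ' → Typing Γ .unit .unit
  | lit : Weaken Γ Γ' → AllNone Γ' → Typing Γ (.lit n) .prim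
  | letE : Split Γ Γ₁ Γ₂ → Typing Γ₁ e₁ ρ → Typing (some ρ :: Γ₂) e₂ τ →
      Typing Γ (.letE e₁ e₂) τ
  | con : ts[c]? = some (some τ) → Typing Γ e τ →
      Typing Γ (.con c e) (.variant ts)
  | caseE : Split Γ Γ₁ Γ₂ → Typing Γ₁ e₁ (.variant ts) →
      ts[c]? = some (some ρ) →
      Typing (some ρ :: Γ₂) e₂ τ →
      Typing (some (.variant (ts.set c none)) :: Γ₂) e₃ τ →
      Typing Γ (.caseE e₁ c e₂ e₃) τ
  | rcd : TypingList Γ es τs →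
      Typing Γ (.rcd es) (.record (τs.map ((·, false))) .unboxed)
  | take : Split Γ Γ₁ Γ₂ → m ≠ .readOnly →
      Typing Γ₁ e₁ (.record fs m) → fs[k]? = some (ρ, false) →
      Typing (some (.record (fs.set k (ρ, true)) m) :: some ρ :: Γ₂) e₂ τ →
      Typing Γ (.take e₁ k e₂) τ
  | put : Split Γ Γ₁ Γ₂ → m ≠ .readOnly →
      Typing Γ₁ e₁ (.record fs m) → fs[k]? = some (ρ, true) →
      Typing Γ₂ e₂ ρ →
      Typing Γ (.put e₁ k e₂) (.record (fs.set k (ρ, false)) m)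

/-- Typing of lists of expressions (for record construction). -/
inductive TypingList : Ctx → List Expr → List Ty → Prop
  | nil : Weaken Γ Γ' → AllNone Γ' → TypingList Γ [] []
  | cons : Split Γ Γ₁ Γ₂ → Typing Γ₁ e τ → TypingList Γ₂ es τs →
      TypingList Γ (e :: es) (τ :: τs)
end

mutual
/-- Big-step value semantics V ⊢ e ⇓ v. -/
inductive VEval : List VVal → Expr → VVal → Prop
  | var : V[n]? = some v → VEval V (.var n) v
  | unit : VEval V .unit .unit
  | lit : VEval V (.lit n) (.lit n)
  | letE : VEval V e₁ v₁ → VEval (v₁ :: V) e₂ v → VEval V (.letE e₁ e₂) v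
  | con : VEval V e v → VEval V (.con c e) (.con c v)
  | caseMatch : VEval V e₁ (.con c v') → VEval (v' :: V) e₂ v →
      VEval V (.caseE e₁ c e₂ e₃) v
  | caseElse : VEval V e₁ (.con b v') → b ≠ c → VEval (.con b v' :: V) e₃ v →
      VEval V (.caseE e₁ c e₂ e₃) v
  | rcd : VEvalList V es vs → VEval V (.rcd es) (.rcd vs)
  | take : VEval V e₁ (.rcd vs) → vs[k]? = some vk →
      VEval (.rcd vs :: vk :: V) e₂ v → VEval V (.take e₁ k e₂) v
  | put : VEval V e₁ (.rcd vs) → VEval V e₂ vk →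
      VEval V (.put e₁ k e₂) (.rcd (vs.set k vk))

inductive VEvalList : List VVal → List Expr → List VVal → Prop
  | nil : VEvalList V [] []
  | cons : VEval V e v → VEvalList V es vs → VEvalList V (e :: es) (v :: vs)
end

mutual
/-- Big-step update semantics U ⊢ e | μ ⇓ u | μ'; `put` on a boxed record
    destructively updates the store. -/
inductive UEval : List UVal → Expr → Store → UVal → Store → Prop
  | var : U[n]? = some u → UEval U (.var n) μ u μ
  | unit : UEval U .unit μ .unit μ
  | lit : UEval U (.lit n) μ (.lit n) μ
  | letE : UEval U e₁ μ u₁ μ₁ → UEval (u₁ :: U) e₂ μ₁ u μ₂ →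
      UEval U (.letE e₁ e₂) μ u μ₂
  | con : UEval U e μ u μ' → UEval U (.con c e) μ (.con c u) μ'
  | caseMatch : UEval U e₁ μ (.con c u') μ₁ → UEval (u' :: U) e₂ μ₁ u μ₂ →
      UEval U (.caseE e₁ c e₂ e₃) μ u μ₂
  | caseElse : UEval U e₁ μ (.con b u') μ₁ → b ≠ c →
      UEval (.con b u' :: U) e₃ μ₁ u μ₂ →
      UEval U (.caseE e₁ c e₂ e₃) μ u μ₂
  | rcd : UEvalList U es μ us μ' → UEval U (.rcd es) μ (.rcd us) μ'
  | takeUnboxed : UEval U e₁ μ (.rcd us) μ₁ → us[k]? = some uk →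
      UEval (.rcd us :: uk :: U) e₂ μ₁ u μ₂ → UEval U (.take e₁ k e₂) μ u μ₂
  | takeBoxed : UEval U e₁ μ (.ptr p) μ₁ → μ₁ p = some (.rcd us) →
      us[k]? = some uk →
      UEval (.ptr p :: uk :: U) e₂ μ₁ u μ₂ → UEval U (.take e₁ k e₂) μ u μ₂
  | putUnboxed : UEval U e₁ μ (.rcd us) μ₁ → UEval U e₂ μ₁ uk μ₂ →
      UEval U (.put e₁ k e₂) μ (.rcd (us.set k uk)) μ₂
  | putBoxed : UEval U e₁ μ (.ptr p) μ₁ → UEval U e₂ μ₁ uk μ₂ →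
      μ₂ p = some (.rcd us) →
      UEval U (.put e₁ k e₂) μ (.ptr p)
        (Function.update μ₂ p (some (.rcd (us.set k uk))))

inductive UEvalList : List UVal → List Expr → Store → List UVal → Store → Prop
  | nil : UEvalList U [] μ [] μ
  | cons : UEval U e μ u μ₁ → UEvalList U es μ₁ us μ₂ →
      UEvalList U (e :: es) μ (u :: us) μ₂
end

mutual
/-- The correspondence relation `u | μ : v : τ [ro: r, rw: w]`. -/
inductive Corr : UVal → Store → VVal → Ty → Set Ptr → Set Ptr → Prop
  | lit : Corr (.lit n) μ (.lit n) .prim ∅ ∅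
  | unit : Corr .unit μ .unit .unit ∅ ∅
  | con : ts[c]? = some (some τ) → Corr u μ v τ r w →
      Corr (.con c u) μ (.con c v) (.variant ts) r w
  | recU : CorrFields us μ vs fs r w →
      Corr (.rcd us) μ (.rcd vs) (.record fs .unboxed) r w
  | recW : μ p = some (.rcd us) → CorrFields us μ vs fs r w →
      Corr (.ptr p) μ (.rcd vs) (.record fs .writable) r ({p} ∪ w)
  | recR : μ p = some (.rcd us) → CorrFields us μ vs fs r ∅ →
      Corr (.ptr p) μ (.rcd vs) (.record fs .readOnly) ({p} ∪ r) ∅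

/-- Field-wise correspondence with non-aliasing of writable pointers;
    taken fields are skipped. -/
inductive CorrFields : List UVal → Store → List VVal → List (Ty × Bool) → Set Ptr → Set Ptr → Prop
  | nil : CorrFields [] μ [] [] ∅ ∅
  | cons : Corr u μ v τ r w → CorrFields us μ vs fs r' w' →
      w ∩ (r' ∪ w') = ∅ → w' ∩ (r ∪ w) = ∅ →
      CorrFields (u :: us) μ (v :: vs) ((τ, false) :: fs) (r ∪ r') (w ∪ w')
  | taken : CorrFields us μ vs fs r w →
      CorrFields (u :: us) μ (v :: vs) ((τ, true) :: fs) r w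
end

/-- Environment correspondence `U | μ : V : Γ [ro: r, rw: w]`. -/
inductive EnvCorr : List UVal → Store → List VVal → Ctx → Set Ptr → Set Ptr → Prop
  | nil : EnvCorr [] μ [] [] ∅ ∅
  | consSome : Corr u μ v τ r w → EnvCorr U μ V Γ r' w' →
      w ∩ (r' ∪ w') = ∅ → w' ∩ (r ∪ w) = ∅ →
      EnvCorr (u :: U) μ (v :: V) (some τ :: Γ) (r ∪ r') (w ∪ w')
  | consNone : EnvCorr U μ V Γ r w →
      EnvCorr (u :: U) μ (v :: V) (none :: Γ) r w

/-- The framing relation: inertia, leak freedom, fresh allocation. -/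
def frame (wi : Set Ptr) (μi : Store) (wo : Set Ptr) (μo : Store) : Prop :=
  ∀ p : Ptr,
    (p ∉ wi ∪ wo → μi p = μo p) ∧
    (p ∈ wi → p ∉ wo → μo p = none) ∧
    (p ∉ wi → p ∈ wo → μi p = none)


/-! ### Auxiliary development: totality of the value semantics -/

/-- Value typing for value-semantics values. -/
inductive VTy : VVal → Ty → Prop
  | lit : VTy (.lit n) .prim
  | unit : VTy .unit .unit
  | con : ts[c]? = some (some τ) → VTy v τ → VTy (.con c v) (.variant ts)
  | rcd : vs.length = fs.length →
      (∀ (i : ℕ) τ v, fs[i]? = some (τ, false) → vs[i]? = some v → VTy v τ) →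
      VTy (.rcd vs) (.record fs m)

theorem corr_vty {u : UVal} {μ : Store} {v : VVal} {τ : Ty} {r w : Set Ptr}
    (h : Corr u μ v τ r w) : VTy v τ := by
  induction h using Corr.rec
    (motive_2 := fun us μ vs fs r w _ =>
      vs.length = fs.length ∧
      ∀ (i : ℕ) τ v, fs[i]? = some (τ, false) → vs[i]? = some v → VTy v τ) with
  | lit => exact .lit
  | unit => exact .unit
  | con h _ ih => exact .con h ih
  | recU _ ih => exact .rcd ih.1 ih.2
  | recW _ _ ih => exact .rcd ih.1 ih.2
  | recR _ _ ih => exact .rcd ih.1 ih.2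
  | nil => exact ⟨rfl, by intro i τ v h _; cases i <;> simp at h⟩
  | cons _ _ _ _ ih1 ih2 =>
      refine ⟨by simpa using ih2.1, ?_⟩
      intro i τ v hf hv
      cases i with
      | zero =>
          simp at hf hv
          subst hv
          exact hf ▸ ih1
      | succ n => exact ih2.2 n τ v hf hv
  | taken _ ih =>
      refine ⟨by simpa using ih.1, ?_⟩
      intro i τ v hf hv
      cases i with
      | zero => simp at hf
      | succ n => exact ih.2 n τ v hf hv

/-- A value environment matching a context. -/
def GoodEnv (V : List VVal) (Γ : Ctx) : Prop :=
  V.length = Γ.length ∧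
  ∀ (n : ℕ) τ, Γ[n]? = some (some τ) → ∃ v, V[n]? = some v ∧ VTy v τ

theorem envcorr_good {U : List UVal} {μ : Store} {V : List VVal} {Γ : Ctx}
    {r w : Set Ptr} (h : EnvCorr U μ V Γ r w) : GoodEnv V Γ := by
  induction h with
  | nil => exact ⟨rfl, by intro n τ h; cases n <;> simp at h⟩
  | consSome hc _ _ _ ih =>
      refine ⟨by simp [ih.1], ?_⟩
      intro n τ h
      cases n with
      | zero =>
          simp at h
          subst h
          exact ⟨_, rfl, corr_vty hc⟩
      | succ n => exact ih.2 n τ h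
  | consNone _ ih =>
      refine ⟨by simp [ih.1], ?_⟩
      intro n τ h
      cases n with
      | zero => simp at h
      | succ n => exact ih.2 n τ h

theorem weaken_length {Γ Γ' : Ctx} (h : Weaken Γ Γ') : Γ.length = Γ'.length := by
  induction h <;> simp [*]

theorem weaken_get {Γ Γ' : Ctx} (h : Weaken Γ Γ') :
    ∀ (n : ℕ) τ, Γ'[n]? = some (some τ) → Γ[n]? = some (some τ) := by
  induction h with
  | nil => intro n τ h; cases n <;> simp at h
  | keep _ ih =>
      intro n τ h
      cases n with
      | zero => exact h
      | succ n => exact ih n τ h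
  | drop _ _ _ ih =>
      intro n τ h
      cases n with
      | zero => simp at h
      | succ n => exact ih n τ h

theorem good_weaken {Γ Γ' : Ctx} {V : List VVal} (h : Weaken Γ Γ')
    (g : GoodEnv V Γ) : GoodEnv V Γ' :=
  ⟨g.1.trans (weaken_length h), fun n τ hn => g.2 n τ (weaken_get h n τ hn)⟩

theorem split_length {Γ Γ₁ Γ₂ : Ctx} (h : Split Γ Γ₁ Γ₂) :
    Γ₁.length = Γ.length ∧ Γ₂.length = Γ.length := by
  induction h <;> simp [*]

theorem split_get₁ {Γ Γ₁ Γ₂ : Ctx} (h : Split Γ Γ₁ Γ₂) :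
    ∀ (n : ℕ) τ, Γ₁[n]? = some (some τ) → Γ[n]? = some (some τ) := by
  induction h with
  | nil => intro n τ h; cases n <;> simp at h
  | none _ ih =>
      intro n τ h
      cases n with
      | zero => simp at h
      | succ n => exact ih n τ h
  | left _ ih =>
      intro n τ h
      cases n with
      | zero => exact h
      | succ n => exact ih n τ h
  | right _ ih =>
      intro n τ h
      cases n with
      | zero => simp at h
      | succ n => exact ih n τ h
  | both _ _ _ ih =>
      intro n τ h
      cases n with
      | zero => exact h
      | succ n => exact ih n τ h

theorem split_get₂ {Γ Γ₁ Γ₂ : Ctx} (h : Split Γ Γ₁ Γ₂) :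
    ∀ (n : ℕ) τ, Γ₂[n]? = some (some τ) → Γ[n]? = some (some τ) := by
  induction h with
  | nil => intro n τ h; cases n <;> simp at h
  | none _ ih =>
      intro n τ h
      cases n with
      | zero => simp at h
      | succ n => exact ih n τ h
  | left _ ih =>
      intro n τ h
      cases n with
      | zero => simp at h
      | succ n => exact ih n τ h
  | right _ ih =>
      intro n τ h
      cases n with
      | zero => exact h
      | succ n => exact ih n τ h
  | both _ _ _ ih =>
      intro n τ h
      cases n with
      | zero => exact h
      | succ n => exact ih n τ h

theorem good_split₁ {Γ Γ₁ Γ₂ : Ctx} {V : List VVal} (h : Split Γ Γ₁ Γ₂)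
    (g : GoodEnv V Γ) : GoodEnv V Γ₁ :=
  ⟨g.1.trans (split_length h).1.symm, fun n τ hn => g.2 n τ (split_get₁ h n τ hn)⟩

theorem good_split₂ {Γ Γ₁ Γ₂ : Ctx} {V : List VVal} (h : Split Γ Γ₁ Γ₂)
    (g : GoodEnv V Γ) : GoodEnv V Γ₂ :=
  ⟨g.1.trans (split_length h).2.symm, fun n τ hn => g.2 n τ (split_get₂ h n τ hn)⟩

theorem good_cons {v : VVal} {τ : Ty} {V : List VVal} {Γ : Ctx}
    (hv : VTy v τ) (g : GoodEnv V Γ) : GoodEnv (v :: V) (some τ :: Γ) := by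
  refine ⟨by simp [g.1], ?_⟩
  intro n τ' h
  cases n with
  | zero =>
      simp at h
      subst h
      exact ⟨v, rfl, hv⟩
  | succ n => exact g.2 n τ' h

theorem get?_some_of_lt {α : Type _} {l : List α} {n : ℕ} (h : n < l.length) :
    ∃ a, l[n]? = some a := by
  cases hl : l[n]? with
  | none => exact absurd (List.getElem?_eq_none_iff.mp hl) (by omega)
  | some a => exact ⟨a, rfl⟩

theorem lt_of_get?_eq_some {α : Type _} {l : List α} {n : ℕ} {a : α}
    (h : l[n]? = some a) : n < l.length := by
  by_contra hn
  rw [List.getElem?_eq_none_iff.mpr (by omega)] at h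
  exact nomatch h


theorem vty_rcd_inv {v : VVal} {fs : List (Ty × Bool)} {m : Mode}
    (h : VTy v (.record fs m)) :
    ∃ vs, v = .rcd vs ∧ vs.length = fs.length ∧
      ∀ (i : ℕ) τ v', fs[i]? = some (τ, false) → vs[i]? = some v' → VTy v' τ := by
  cases h with
  | rcd hlen hfld => exact ⟨_, rfl, hlen, hfld⟩

theorem case_total {ts : List (Option Ty)} {c : ℕ} {ρ : Ty} {v₁ : VVal}
    (hts : ts[c]? = some (some ρ)) (h : VTy v₁ (.variant ts)) :
    (∃ v', v₁ = .con c v' ∧ VTy v' ρ) ∨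
      (∃ b v', b ≠ c ∧ v₁ = .con b v' ∧
        VTy (.con b v') (.variant (ts.set c none))) := by
  cases h with
  | con hb htv =>
      rename_i b τb v'
      by_cases hbc : b = c
      · subst hbc
        rw [hts] at hb
        injection hb with hb
        injection hb with hb
        subst hb
        exact .inl ⟨v', rfl, htv⟩
      · refine .inr ⟨b, v', hbc, rfl, .con ?_ htv⟩
        rw [List.getElem?_set_ne (fun h => hbc h.symm)]
        exact hb

theorem take_field {vs : List VVal} {fs : List (Ty × Bool)} {k : ℕ} {ρ : Ty}
    (hlen : vs.length = fs.length)
    (hfld : ∀ (i : ℕ) τ v', fs[i]? = some (τ, false) → vs[i]? = some v' → VTy v' τ)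
    (hfk : fs[k]? = some (ρ, false)) :
    ∃ vk, vs[k]? = some vk ∧ VTy vk ρ := by
  obtain ⟨vk, hvk⟩ := get?_some_of_lt (l := vs)
    (by rw [hlen]; exact lt_of_get?_eq_some hfk)
  exact ⟨vk, hvk, hfld _ _ _ hfk hvk⟩

theorem vty_hole {vs : List VVal} {fs : List (Ty × Bool)} {m : Mode} {k : ℕ} {ρ : Ty}
    (hlen : vs.length = fs.length)
    (hfld : ∀ (i : ℕ) τ v', fs[i]? = some (τ, false) → vs[i]? = some v' → VTy v' τ)
    (hk : k < fs.length) :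
    VTy (.rcd vs) (.record (fs.set k (ρ, true)) m) := by
  refine .rcd (by simp [hlen]) ?_
  intro i τ' v' hf hv
  by_cases hik : i = k
  · subst hik
    rw [List.getElem?_set_self hk] at hf
    simp at hf
  · rw [List.getElem?_set_ne (fun h => hik h.symm)] at hf
    exact hfld i τ' v' hf hv

theorem vty_put {vs : List VVal} {fs : List (Ty × Bool)} {m : Mode} {k : ℕ}
    {ρ : Ty} {vk : VVal}
    (hlen : vs.length = fs.length)
    (hfld : ∀ (i : ℕ) τ v', fs[i]? = some (τ, false) → vs[i]? = some v' → VTy v' τ)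
    (hk : k < fs.length) (htk : VTy vk ρ) :
    VTy (.rcd (vs.set k vk)) (.record (fs.set k (ρ, false)) m) := by
  refine .rcd (by simp [hlen]) ?_
  intro i τ' v' hf hv
  by_cases hik : i = k
  · subst hik
    rw [List.getElem?_set_self hk] at hf
    rw [List.getElem?_set_self (by rw [hlen]; exact hk)] at hv
    simp at hf hv
    exact hf ▸ hv ▸ htk
  · rw [List.getElem?_set_ne (fun h => hik h.symm)] at hf
    rw [List.getElem?_set_ne (fun h => hik h.symm)] at hv
    exact hfld i τ' v' hf hv

/-- Totality of the value semantics on well-typed expressions. -/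
theorem typing_total {Γ : Ctx} {e : Expr} {τ : Ty} (ht : Typing Γ e τ) :
    ∀ V, GoodEnv V Γ → ∃ v, VEval V e v ∧ VTy v τ := by
  induction ht using Typing.rec
    (motive_2 := fun Γ es τs _ => ∀ V, GoodEnv V Γ → ∃ vs, VEvalList V es vs ∧
      vs.length = τs.length ∧
      ∀ (i : ℕ) τ v, τs[i]? = some τ → vs[i]? = some v → VTy v τ) with
  | var hw ho =>
      intro V g
      obtain ⟨v, hv, hty⟩ := g.2 _ _ (weaken_get hw _ _ ho.1)
      exact ⟨v, .var hv, hty⟩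
  | unit _ _ => exact fun V g => ⟨.unit, .unit, .unit⟩
  | lit _ _ => exact fun V g => ⟨_, .lit, .lit⟩
  | letE hs _ _ ih1 ih2 =>
      intro V g
      obtain ⟨v₁, he₁, ht₁⟩ := ih1 V (good_split₁ hs g)
      obtain ⟨v, he₂, ht₂⟩ := ih2 (v₁ :: V) (good_cons ht₁ (good_split₂ hs g))
      exact ⟨v, .letE he₁ he₂, ht₂⟩
  | con hts _ ih =>
      intro V g
      obtain ⟨v, he, htv⟩ := ih V g
      exact ⟨_, .con he, .con hts htv⟩
  | caseE hs _ hts _ _ ih1 ih2 ih3 =>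
      intro V g
      obtain ⟨v₁, he₁, ht₁⟩ := ih1 V (good_split₁ hs g)
      rcases case_total hts ht₁ with ⟨v', rfl, hv'⟩ | ⟨b, v', hbc, rfl, hv'⟩
      · obtain ⟨v, he₂, ht₂⟩ := ih2 (v' :: V) (good_cons hv' (good_split₂ hs g))
        exact ⟨v, .caseMatch he₁ he₂, ht₂⟩
      · obtain ⟨v, he₃, ht₃⟩ :=
          ih3 (.con b v' :: V) (good_cons hv' (good_split₂ hs g))
        exact ⟨v, .caseElse he₁ hbc he₃, ht₃⟩
  | rcd _ ih =>
      intro V g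
      obtain ⟨vs, hes, hlen, hty⟩ := ih V g
      refine ⟨.rcd vs, .rcd hes, .rcd (by simpa using hlen) ?_⟩
      intro i τ' v' hf hv
      rw [List.getElem?_map] at hf
      rename_i τs _
      cases hτ : τs[i]? with
      | none => rw [hτ] at hf; simp at hf
      | some τ₀ =>
          rw [hτ] at hf
          simp at hf
          exact hty i τ' v' (by rw [hτ, hf]) hv
  | take hs hm _ hfk _ ih1 ih2 =>
      intro V g
      obtain ⟨v₁, he₁, ht₁⟩ := ih1 V (good_split₁ hs g)
      obtain ⟨vs, rfl, hlen, hfld⟩ := vty_rcd_inv ht₁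
      obtain ⟨vk, hvk, htvk⟩ := take_field hlen hfld hfk
      obtain ⟨v, he₂, ht₂⟩ :=
        ih2 (.rcd vs :: vk :: V)
          (good_cons (vty_hole hlen hfld (lt_of_get?_eq_some hfk))
            (good_cons htvk (good_split₂ hs g)))
      exact ⟨v, .take he₁ hvk he₂, ht₂⟩
  | put hs hm _ hfk _ ih1 ih2 =>
      intro V g
      obtain ⟨v₁, he₁, ht₁⟩ := ih1 V (good_split₁ hs g)
      obtain ⟨vk, he₂, htk⟩ := ih2 V (good_split₂ hs g)
      obtain ⟨vs, rfl, hlen, hfld⟩ := vty_rcd_inv ht₁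
      exact ⟨_, .put he₁ he₂,
        vty_put hlen hfld (lt_of_get?_eq_some hfk) htk⟩
  | nil _ _ =>
      exact ⟨[], .nil, rfl, by intro i τ v h _; cases i <;> simp at h⟩
  | cons hs _ _ ih1 ih2 =>
      rename_i V g
      obtain ⟨v, he, htv⟩ := ih1 V (good_split₁ hs g)
      obtain ⟨vs, hes, hlen, hty⟩ := ih2 V (good_split₂ hs g)
      refine ⟨v :: vs, .cons he hes, by simp [hlen], ?_⟩
      intro i τ' v' hf hv
      cases i with
      | zero =>
          simp at hf hv
          subst hv
          exact hf ▸ htv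
      | succ n => exact hty n τ' v' hf hv

/-- Upward propagation of evaluation: whenever the update semantics evaluates,
    the value semantics also evaluates. -/
theorem upward_propagation {Γ : Ctx} {e : Expr} {τ : Ty}
    {U : List UVal} {μ μ' : Store} {V : List VVal} {r w : Set Ptr} {u : UVal}
    (ht : Typing Γ e τ) (hc : EnvCorr U μ V Γ r w)
    (hu : UEval U e μ u μ') :
    ∃ v, VEval V e v := by
  obtain ⟨v, hv, -⟩ := typing_total ht V (envcorr_good hc)
  exact ⟨v, hv⟩
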